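/- Let u ∈ ℂ and let φ, φ′ ∈ ℝ with φ < φ′ and φ′ − φ < π. Let f : ℂ → ℂ be holomorphic on an open set containing the closed sector S = {u + r·exp(i·θ) : r ≥ 0, φ ≤ θ ≤ φ′}, and assume there exist c > 0 and m ∈ ℕ such that |f(λ)| ≤ c·(1 + |λ|)^m for all λ ∈ S. Then for every z ∈ ℂ \ {0} with Re(exp(i·φ)/z) > 0 and Re(exp(i·φ′)/z) > 0, the integrals ∫₀^∞ f(u + t·exp(i·φ)) · exp(−(u + t·exp(i·φ))/z) · exp(i·φ) dt and ∫₀^∞ f(u + t·exp(i·φ′)) · exp(−(u + t·exp(i·φ′))/z) · exp(i·φ′) dt both converge absolutely and are equal. -/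

import Mathlib

open MeasureTheory
open Filter Set Real Topology Complex

lemma trig_key (φ φ' θ A B : ℝ) :
    Real.sin (φ' - φ) * (A * Real.cos θ - B * Real.sin θ)
    = Real.sin (φ' - θ) * (A * Real.cos φ - B * Real.sin φ)
    + Real.sin (θ - φ) * (A * Real.cos φ' - B * Real.sin φ') := by
  simp only [Real.sin_sub]; ring

lemma exp_mul_re (θ : ℝ) (w : ℂ) :
    (Complex.exp (Complex.I * (θ:ℂ)) * w).re = w.re * Real.cos θ - w.im * Real.sin θ := by
  rw [mul_comm Complex.I, Complex.exp_mul_I]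
  simp [Complex.add_re, Complex.mul_re, Complex.cos_ofReal_re, Complex.sin_ofReal_re]
  ring

lemma sector_re_pos {φ φ' θ : ℝ} (hφ : φ < φ') (hπ : φ' - φ < Real.pi)
    (hθ1 : φ ≤ θ) (hθ2 : θ ≤ φ') {w : ℂ}
    (h1 : 0 < (Complex.exp (Complex.I * (φ:ℂ)) * w).re)
    (h2 : 0 < (Complex.exp (Complex.I * (φ':ℂ)) * w).re) :
    0 < (Complex.exp (Complex.I * (θ:ℂ)) * w).re := by
  rw [exp_mul_re] at *
  have hs : 0 < Real.sin (φ' - φ) :=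
    Real.sin_pos_of_pos_of_lt_pi (by linarith) hπ
  have key := trig_key φ φ' θ w.re w.im
  have hiner : 0 < Real.sin (φ' - θ) * (w.re * Real.cos φ - w.im * Real.sin φ)
      + Real.sin (θ - φ) * (w.re * Real.cos φ' - w.im * Real.sin φ') := by
    rcases lt_or_eq_of_le hθ2 with h | h
    · have hp : 0 < Real.sin (φ' - θ) :=
        Real.sin_pos_of_pos_of_lt_pi (by linarith) (by linarith)
      have hq : 0 ≤ Real.sin (θ - φ) :=
        Real.sin_nonneg_of_nonneg_of_le_pi (by linarith) (by linarith)
      have := mul_pos hp h1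
      nlinarith [mul_nonneg hq h2.le]
    · subst h
      simp only [sub_self, Real.sin_zero, zero_mul, zero_add]
      exact mul_pos hs h2
  nlinarith

lemma tendsto_poly_mul_exp_neg (p : Polynomial ℝ) {δ : ℝ} (hδ : 0 < δ) :
    Tendsto (fun R => p.eval R * Real.exp (-(δ * R))) atTop (𝓝 0) := by
  have h := (p.comp (Polynomial.C δ⁻¹ * Polynomial.X)).tendsto_div_exp_atTop
  have h2 : Tendsto (fun R : ℝ => δ * R) atTop atTop :=
    (tendsto_id.const_mul_atTop hδ)
  refine (h.comp h2).congr fun R => ?_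
  simp [Polynomial.eval_comp, Real.exp_neg, div_eq_mul_inv,
    inv_mul_cancel_left₀ hδ.ne']

lemma integrableOn_poly_exp (C : ℝ) (m : ℕ) {δ : ℝ} (hδ : 0 < δ) :
    IntegrableOn (fun t : ℝ => C * (1+t)^m * Real.exp (-(δ*t))) (Set.Ioi 0) := by
  refine integrable_of_isBigO_exp_neg (b := δ/2) (by linarith)
    (by fun_prop) ?_
  have : Tendsto (fun t : ℝ => (C * (1+t)^m * Real.exp (-(δ*t))) / Real.exp (-(δ/2 * t)))
      atTop (𝓝 0) := by
    have := tendsto_poly_mul_exp_neg (Polynomial.C C * (1 + Polynomial.X)^m)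
      (δ := δ/2) (by linarith)
    refine this.congr' ?_
    filter_upwards [eventually_ge_atTop (0:ℝ)] with t _
    simp only [Polynomial.eval_mul, Polynomial.eval_pow, Polynomial.eval_add,
      Polynomial.eval_C, Polynomial.eval_X, Polynomial.eval_one]
    rw [eq_div_iff (Real.exp_ne_zero _), mul_assoc, mul_assoc, ← Real.exp_add]
    ring_nf
  have hB := (Asymptotics.isLittleO_of_tendsto
    (fun x hx => absurd hx (Real.exp_ne_zero _)) this).isBigO
  refine hB.trans (Asymptotics.isBigO_of_le _ fun x => ?_)
  rw [div_mul_eq_mul_div, mul_div_assoc]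
  simp
  ring_nf
  exact le_rfl


/-- (Lemma 3.4 of the paper, honest form.) Let `f` be holomorphic on an
open set containing the closed sector `S = {u + r e^{iθ} : r ≥ 0, φ ≤ θ ≤ φ′}` (with
`φ < φ′`, `φ′ − φ < π`) and polynomially bounded on `S`.  Then for every `z ≠ 0` with
`Re(e^{iφ}/z) > 0` and `Re(e^{iφ′}/z) > 0`, the Laplace transforms of `f` along the
half-lines `L(u,φ)` and `L(u,φ′)` converge absolutely and are equal. -/
theorem stmt_3 (u : ℂ) (φ φ' : ℝ) (hφ : φ < φ') (hφπ : φ' - φ < Real.pi)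
    (f : ℂ → ℂ)
    (hf : ∃ U : Set ℂ, IsOpen U ∧
      {lam : ℂ | ∃ r θ : ℝ, 0 ≤ r ∧ φ ≤ θ ∧ θ ≤ φ' ∧
        lam = u + (r : ℂ) * Complex.exp (Complex.I * (θ : ℂ))} ⊆ U ∧
      DifferentiableOn ℂ f U)
    (c : ℝ) (hc : 0 < c) (m : ℕ)
    (hbound : ∀ lam ∈ {lam : ℂ | ∃ r θ : ℝ, 0 ≤ r ∧ φ ≤ θ ∧ θ ≤ φ' ∧
        lam = u + (r : ℂ) * Complex.exp (Complex.I * (θ : ℂ))},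
      ‖f lam‖ ≤ c * (1 + ‖lam‖) ^ m)
    (z : ℂ) (hz : z ≠ 0)
    (h1 : 0 < (Complex.exp (Complex.I * (φ : ℂ)) / z).re)
    (h2 : 0 < (Complex.exp (Complex.I * (φ' : ℂ)) / z).re) :
    IntegrableOn
      (fun t : ℝ => f (u + (t : ℂ) * Complex.exp (Complex.I * (φ : ℂ)))
        * Complex.exp (-(u + (t : ℂ) * Complex.exp (Complex.I * (φ : ℂ))) / z)
        * Complex.exp (Complex.I * (φ : ℂ))) (Set.Ioi 0) ∧
    IntegrableOn
      (fun t : ℝ => f (u + (t : ℂ) * Complex.exp (Complex.I * (φ' : ℂ)))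
        * Complex.exp (-(u + (t : ℂ) * Complex.exp (Complex.I * (φ' : ℂ))) / z)
        * Complex.exp (Complex.I * (φ' : ℂ))) (Set.Ioi 0) ∧
    ∫ t in Set.Ioi (0 : ℝ), f (u + (t : ℂ) * Complex.exp (Complex.I * (φ : ℂ)))
        * Complex.exp (-(u + (t : ℂ) * Complex.exp (Complex.I * (φ : ℂ))) / z)
        * Complex.exp (Complex.I * (φ : ℂ))
      = ∫ t in Set.Ioi (0 : ℝ), f (u + (t : ℂ) * Complex.exp (Complex.I * (φ' : ℂ)))
        * Complex.exp (-(u + (t : ℂ) * Complex.exp (Complex.I * (φ' : ℂ))) / z)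
        * Complex.exp (Complex.I * (φ' : ℂ)) := by
  obtain ⟨U, hUopen, hSU, hfd⟩ := hf
  set E : ℝ → ℂ := fun θ => Complex.exp (Complex.I * (θ:ℂ)) with hE
  set G : ℂ → ℂ := fun lam => f lam * Complex.exp (-lam / z) with hG
  set P : ℝ → ℝ → ℂ := fun θ t => G (u + (t:ℂ) * E θ) * E θ with hP
  set F : ℂ → ℂ := fun w => G (u + Complex.exp w) * Complex.exp w with hF
  have hmem : ∀ (t θ : ℝ), 0 ≤ t → φ ≤ θ → θ ≤ φ' →
      (u + (t:ℂ) * E θ) ∈ {lam : ℂ | ∃ r θ : ℝ, 0 ≤ r ∧ φ ≤ θ ∧ θ ≤ φ' ∧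
        lam = u + (r : ℂ) * Complex.exp (Complex.I * (θ : ℂ))} :=
    fun t θ ht ha hb => ⟨t, θ, ht, ha, hb, rfl⟩
  have habsE : ∀ θ : ℝ, ‖E θ‖ = 1 := by
    intro θ
    simp [hE, Complex.norm_exp]
  -- the uniform lower bound δ
  obtain ⟨θ₀, hθ₀, hθ₀min⟩ :=
    isCompact_Icc.exists_isMinOn (Set.nonempty_Icc.2 hφ.le)
      (Continuous.continuousOn (by fun_prop) :
        ContinuousOn (fun θ : ℝ => (E θ / z).re) (Set.Icc φ φ'))
  set δ : ℝ := (E θ₀ / z).re with hδdef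
  have hδpos : 0 < δ := by
    have h1' := h1; have h2' := h2
    rw [div_eq_mul_inv] at h1' h2'
    have := sector_re_pos hφ hφπ hθ₀.1 hθ₀.2 h1' h2'
    simpa [hδdef, hE, div_eq_mul_inv] using this
  have hδle : ∀ θ, φ ≤ θ → θ ≤ φ' → δ ≤ (E θ / z).re := fun θ a b =>
    hθ₀min ⟨a, b⟩
  set C : ℝ := c * (1 + ‖u‖)^m * Real.exp (-(u/z).re) with hC
  -- pointwise bound on G along the sector
  have hGb : ∀ θ, φ ≤ θ → θ ≤ φ' → ∀ t : ℝ, 0 ≤ t →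
      ‖G (u + (t:ℂ) * E θ)‖ ≤ C * (1+t)^m * Real.exp (-(δ*t)) := by
    intro θ hθ1 hθ2 t ht
    have hxre : ((u + (t:ℂ) * E θ) / z).re = (u/z).re + t * (E θ / z).re := by
      rw [add_div, mul_div_assoc, Complex.add_re, Complex.re_ofReal_mul]
    have hfx := hbound _ (hmem t θ ht hθ1 hθ2)
    have habs : ‖u + (t:ℂ) * E θ‖ ≤ ‖u‖ + t := by
      refine (norm_add_le _ _).trans ?_
      rw [norm_mul, habsE θ, Complex.norm_real, Real.norm_of_nonneg ht, mul_one]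
    have hexp : Real.exp ((-(u + (t:ℂ)*E θ)/z).re)
        ≤ Real.exp (-(u/z).re) * Real.exp (-(δ*t)) := by
      rw [← Real.exp_add, Real.exp_le_exp, neg_div, Complex.neg_re, hxre]
      have hle := hδle θ hθ1 hθ2
      nlinarith
    have hpow : (1 + ‖u + (t:ℂ) * E θ‖)^m
        ≤ ((1 + ‖u‖) * (1 + t))^m := by
      refine pow_le_pow_left₀ (by positivity) ?_ m
      have := norm_nonneg u
      nlinarith
    simp only [hG, norm_mul, Complex.norm_exp]
    calc ‖f (u + (t:ℂ) * E θ)‖ * Real.exp ((-(u + (t:ℂ)*E θ)/z).re)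
        ≤ (c * (1 + ‖u + (t:ℂ) * E θ‖)^m)
          * (Real.exp (-(u/z).re) * Real.exp (-(δ*t))) := by
          refine mul_le_mul hfx hexp (Real.exp_nonneg _) ?_
          positivity
      _ ≤ (c * ((1 + ‖u‖) * (1 + t))^m)
          * (Real.exp (-(u/z).re) * Real.exp (-(δ*t))) := by
          have : c * (1 + ‖u + (t:ℂ) * E θ‖)^m
              ≤ c * ((1 + ‖u‖) * (1 + t))^m :=
            mul_le_mul_of_nonneg_left hpow hc.le
          refine mul_le_mul_of_nonneg_right this (by positivity)
      _ = C * (1+t)^m * Real.exp (-(δ*t)) := by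
          rw [hC, mul_pow]; ring
  -- continuity of P θ on [0, ∞)
  have hGcont : ContinuousOn G U := by
    rw [hG]
    exact hfd.continuousOn.mul
      (Complex.continuous_exp.comp ((continuous_id.neg).div_const z)).continuousOn
  have hPcont : ∀ θ, φ ≤ θ → θ ≤ φ' → ContinuousOn (fun t : ℝ => P θ t) (Set.Ici 0) := by
    intro θ hθ1 hθ2
    simp only [hP]
    refine ContinuousOn.mul ?_ continuousOn_const
    refine hGcont.comp ?_ ?_
    · exact (continuous_const.add ((Complex.continuous_ofReal).mul continuous_const)).continuousOn
    · intro t ht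
      exact hSU (hmem t θ ht hθ1 hθ2)
  -- integrability of P θ on (0, ∞)
  have hPint : ∀ θ, φ ≤ θ → θ ≤ φ' → IntegrableOn (fun t : ℝ => P θ t) (Set.Ioi 0) := by
    intro θ hθ1 hθ2
    refine (integrableOn_poly_exp C m hδpos).mono' ?_ ?_
    · exact (((hPcont θ hθ1 hθ2).mono Set.Ioi_subset_Ici_self).aestronglyMeasurable
        measurableSet_Ioi)
    · rw [ae_restrict_iff' measurableSet_Ioi]
      refine Filter.Eventually.of_forall fun t ht => ?_
      have hb := hGb θ hθ1 hθ2 t (le_of_lt ht)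
      calc ‖P θ t‖ = ‖G (u + (t:ℂ) * E θ)‖ * ‖E θ‖ := by
            simp only [hP]
            rw [norm_mul]
        _ = ‖G (u + (t:ℂ) * E θ)‖ := by rw [habsE θ, mul_one]
        _ ≤ C * (1+t)^m * Real.exp (-(δ*t)) := hb
  -- exp decomposition
  have hsplit : ∀ w : ℂ, Complex.exp w = ((Real.exp w.re : ℝ) : ℂ) * E w.im := by
    intro w
    conv_lhs => rw [← Complex.re_add_im w]
    rw [Complex.exp_add, Complex.ofReal_exp, hE]
    simp only [mul_comm]
  -- differentiability of F on the preimage of U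
  have hGdiff : DifferentiableOn ℂ G U := by
    rw [hG]
    exact hfd.mul
      ((Complex.differentiable_exp.comp ((differentiable_id.neg).div_const z)).differentiableOn)
  have hFdiff : DifferentiableOn ℂ F ((fun w : ℂ => u + Complex.exp w) ⁻¹' U) := by
    rw [hF]
    refine DifferentiableOn.mul ?_ Complex.differentiable_exp.differentiableOn
    refine hGdiff.comp ?_ ?_
    · exact (differentiable_const u).differentiableOn.add
        Complex.differentiable_exp.differentiableOn
    · intro w hw
      exact hw
  -- horizontal integrals
  have hhor : ∀ θ, φ ≤ θ → θ ≤ φ' → ∀ a b : ℝ,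
      (∫ x in a..b, F ((x:ℂ) + (θ:ℂ) * Complex.I))
        = ∫ t in Real.exp a..Real.exp b, P θ t := by
    intro θ hθ1 hθ2 a b
    have hpt : ∀ x : ℝ, F ((x:ℂ) + (θ:ℂ) * Complex.I) = Real.exp x • P θ (Real.exp x) := by
      intro x
      have him : ((x:ℂ) + (θ:ℂ) * Complex.I).im = θ := by simp
      have hre : ((x:ℂ) + (θ:ℂ) * Complex.I).re = x := by simp
      rw [hF]
      simp only
      rw [hsplit ((x:ℂ) + (θ:ℂ) * Complex.I), him, hre, hP]
      simp only [Complex.real_smul]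
      ring
    have himg : Real.exp '' (Set.uIcc a b) ⊆ Set.Ici 0 := by
      rintro y ⟨x, -, rfl⟩
      exact (Real.exp_pos x).le
    have hcv := intervalIntegral.integral_comp_smul_deriv' (f := Real.exp) (f' := Real.exp)
      (g := fun t => P θ t) (a := a) (b := b)
      (fun x _ => Real.hasDerivAt_exp x) Real.continuous_exp.continuousOn
      ((hPcont θ hθ1 hθ2).mono himg)
    simp only [Function.comp] at hcv
    rw [← hcv]
    exact intervalIntegral.integral_congr fun x _ => hpt x
  -- vertical integral bound
  have hVb : ∀ x : ℝ, ‖∫ y in φ..φ', F ((x:ℂ) + (y:ℂ) * Complex.I)‖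
      ≤ C * (1 + Real.exp x)^m * Real.exp (-(δ * Real.exp x)) * Real.exp x * |φ' - φ| := by
    intro x
    refine intervalIntegral.norm_integral_le_of_norm_le_const fun y hy => ?_
    rw [Set.uIoc_of_le hφ.le] at hy
    have hy1 : φ ≤ y := hy.1.le
    have hy2 : y ≤ φ' := hy.2
    have him : ((x:ℂ) + (y:ℂ) * Complex.I).im = y := by simp
    have hre : ((x:ℂ) + (y:ℂ) * Complex.I).re = x := by simp
    rw [hF]
    simp only
    rw [hsplit ((x:ℂ) + (y:ℂ) * Complex.I), him, hre]
    have habsfac : ‖((Real.exp x : ℝ) : ℂ) * E y‖ = Real.exp x := by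
      rw [norm_mul, habsE y, Complex.norm_real, Real.norm_of_nonneg (Real.exp_pos x).le,
        mul_one]
    rw [norm_mul, habsfac]
    have hb := hGb y hy1 hy2 (Real.exp x) (Real.exp_pos x).le
    exact mul_le_mul_of_nonneg_right hb (Real.exp_pos x).le
  -- rectangle identity
  have hrect : ∀ n : ℕ,
      (∫ x in (-(n:ℝ))..(n:ℝ), F ((x:ℂ) + (φ:ℂ) * Complex.I))
      - (∫ x in (-(n:ℝ))..(n:ℝ), F ((x:ℂ) + (φ':ℂ) * Complex.I))
      + Complex.I • (∫ y in φ..φ', F (((n:ℝ):ℂ) + (y:ℂ) * Complex.I))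
      - Complex.I • (∫ y in φ..φ', F (((-(n:ℝ)):ℂ) + (y:ℂ) * Complex.I)) = 0 := by
    intro n
    have e1 : (((-(n:ℝ)):ℂ) + (φ:ℂ) * Complex.I).re = -(n:ℝ) := by simp
    have e2 : (((-(n:ℝ)):ℂ) + (φ:ℂ) * Complex.I).im = φ := by simp
    have e3 : (((n:ℝ):ℂ) + (φ':ℂ) * Complex.I).re = (n:ℝ) := by simp
    have e4 : (((n:ℝ):ℂ) + (φ':ℂ) * Complex.I).im = φ' := by simp
    have H := Complex.integral_boundary_rect_eq_zero_of_differentiableOn F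
      (((-(n:ℝ)):ℂ) + (φ:ℂ) * Complex.I) (((n:ℝ):ℂ) + (φ':ℂ) * Complex.I) ?_
    · rw [e1, e2, e3, e4, Complex.ofReal_neg] at H
      exact H
    · rw [e1, e2, e3, e4]
      refine hFdiff.mono ?_
      intro w hw
      rw [Complex.mem_reProdIm] at hw
      have him : w.im ∈ Set.Icc φ φ' := by
        rw [Set.uIcc_of_le hφ.le] at hw
        exact hw.2
      show u + Complex.exp w ∈ U
      refine hSU ⟨Real.exp w.re, w.im, (Real.exp_pos _).le, him.1, him.2, ?_⟩
      rw [hsplit w, hE]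
  -- limits of the horizontal integrals
  have htend : ∀ θ, φ ≤ θ → θ ≤ φ' →
      Tendsto (fun n : ℕ => ∫ t in Real.exp (-(n:ℝ))..Real.exp (n:ℝ), P θ t)
        atTop (𝓝 (∫ t in Set.Ioi (0:ℝ), P θ t)) := by
    intro θ hθ1 hθ2
    have hmono : Monotone (fun n : ℕ => Set.Ioc (Real.exp (-(n:ℝ))) (Real.exp (n:ℝ))) := by
      intro i j hij
      have hij' : (i:ℝ) ≤ (j:ℝ) := Nat.cast_le.mpr hij
      exact Set.Ioc_subset_Ioc (Real.exp_le_exp.mpr (by linarith))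
        (Real.exp_le_exp.mpr hij')
    have hunion : (⋃ n : ℕ, Set.Ioc (Real.exp (-(n:ℝ))) (Real.exp (n:ℝ))) = Set.Ioi 0 := by
      ext x
      simp only [Set.mem_iUnion, Set.mem_Ioc, Set.mem_Ioi]
      constructor
      · rintro ⟨n, hx1, hx2⟩
        exact lt_trans (Real.exp_pos _) hx1
      · intro hx
        obtain ⟨n, hn⟩ := exists_nat_ge (|Real.log x| + 1)
        refine ⟨n, ?_, ?_⟩
        · have hlt : -(n:ℝ) < Real.log x := by
            have := neg_abs_le (Real.log x)
            linarith
          calc Real.exp (-(n:ℝ)) < Real.exp (Real.log x) := Real.exp_lt_exp.mpr hlt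
            _ = x := Real.exp_log hx
        · have hle : Real.log x ≤ (n:ℝ) := by
            have := le_abs_self (Real.log x)
            linarith
          calc x = Real.exp (Real.log x) := (Real.exp_log hx).symm
            _ ≤ Real.exp (n:ℝ) := Real.exp_le_exp.mpr hle
    have hT := tendsto_setIntegral_of_monotone (fun n : ℕ => measurableSet_Ioc) hmono
      (by rw [hunion]; exact hPint θ hθ1 hθ2)
    rw [hunion] at hT
    refine hT.congr fun n => ?_
    have hle : Real.exp (-(n:ℝ)) ≤ Real.exp (n:ℝ) :=
      Real.exp_le_exp.mpr ((neg_nonpos.mpr (Nat.cast_nonneg n)).trans (Nat.cast_nonneg n))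
    exact (intervalIntegral.integral_of_le hle).symm
  -- vertical integrals tend to 0
  have hψtop : Tendsto (fun x : ℝ =>
      C * (1 + Real.exp x)^m * Real.exp (-(δ * Real.exp x)) * Real.exp x * |φ' - φ|)
      atTop (𝓝 0) := by
    have hψ : Tendsto (fun r : ℝ => C * (1+r)^m * Real.exp (-(δ*r)) * r * |φ' - φ|)
        atTop (𝓝 0) := by
      have := tendsto_poly_mul_exp_neg
        (Polynomial.C (C * |φ' - φ|) * (1 + Polynomial.X)^m * Polynomial.X) hδpos
      refine this.congr fun r => ?_
      simp only [Polynomial.eval_mul, Polynomial.eval_pow, Polynomial.eval_add,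
        Polynomial.eval_C, Polynomial.eval_X, Polynomial.eval_one]
      ring
    exact hψ.comp Real.tendsto_exp_atTop
  have hψbot : Tendsto (fun x : ℝ =>
      C * (1 + Real.exp x)^m * Real.exp (-(δ * Real.exp x)) * Real.exp x * |φ' - φ|)
      atBot (𝓝 0) := by
    have hcont : Continuous (fun r : ℝ => C * (1+r)^m * Real.exp (-(δ*r)) * r * |φ' - φ|) := by
      fun_prop
    have h0 := (hcont.tendsto 0).comp Real.tendsto_exp_atBot
    simpa [Function.comp_def] using h0
  -- combine
  have hmain : (∫ t in Set.Ioi (0:ℝ), P φ t) = ∫ t in Set.Ioi (0:ℝ), P φ' t := by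
    have h3 := (htend φ le_rfl hφ.le).sub (htend φ' hφ.le le_rfl)
    have hne : ∀ n : ℕ, (∫ t in Real.exp (-(n:ℝ))..Real.exp (n:ℝ), P φ t)
        - (∫ t in Real.exp (-(n:ℝ))..Real.exp (n:ℝ), P φ' t)
        = Complex.I • (∫ y in φ..φ', F (((-(n:ℝ)):ℂ) + (y:ℂ) * Complex.I))
          - Complex.I • (∫ y in φ..φ', F (((n:ℝ):ℂ) + (y:ℂ) * Complex.I)) := by
      intro n
      have H := hrect n
      rw [hhor φ le_rfl hφ.le, hhor φ' hφ.le le_rfl] at H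
      linear_combination H
    have h4 : Tendsto (fun n : ℕ => (∫ t in Real.exp (-(n:ℝ))..Real.exp (n:ℝ), P φ t)
        - ∫ t in Real.exp (-(n:ℝ))..Real.exp (n:ℝ), P φ' t) atTop (𝓝 0) := by
      have hb : ∀ n : ℕ, ‖(∫ t in Real.exp (-(n:ℝ))..Real.exp (n:ℝ), P φ t)
          - ∫ t in Real.exp (-(n:ℝ))..Real.exp (n:ℝ), P φ' t‖
          ≤ C * (1 + Real.exp (-(n:ℝ)))^m * Real.exp (-(δ * Real.exp (-(n:ℝ))))
            * Real.exp (-(n:ℝ)) * |φ' - φ|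
          + C * (1 + Real.exp ((n:ℝ)))^m * Real.exp (-(δ * Real.exp ((n:ℝ))))
            * Real.exp ((n:ℝ)) * |φ' - φ| := by
        intro n
        rw [hne n]
        refine (norm_sub_le _ _).trans ?_
        rw [norm_smul, norm_smul, Complex.norm_I, one_mul, one_mul]
        have hv1 := hVb (-(n:ℝ))
        rw [Complex.ofReal_neg] at hv1
        exact add_le_add hv1 (hVb (n:ℝ))
      have hnegc : Tendsto (fun n : ℕ => -(n:ℝ)) atTop atBot :=
        tendsto_neg_atTop_atBot.comp tendsto_natCast_atTop_atTop
      have hposc : Tendsto (fun n : ℕ => (n:ℝ)) atTop atTop :=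
        tendsto_natCast_atTop_atTop
      have hg0 := (hψbot.comp hnegc).add (hψtop.comp hposc)
      simp only [Function.comp, add_zero] at hg0
      exact squeeze_zero_norm hb hg0
    have := tendsto_nhds_unique h3 h4
    exact sub_eq_zero.mp this
  refine ⟨?_, ?_, ?_⟩
  · have := hPint φ le_rfl hφ.le
    simpa only [hP, hG, hE] using this
  · have := hPint φ' hφ.le le_rfl
    simpa only [hP, hG, hE] using this
  · have := hmain
    simpa only [hP, hG, hE] using this
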